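/- A run of the product automaton is accepting iff the corresponding trace violates the specification: given the product construction TS_p = TS ⊗ A where A accepts exactly the words satisfying ¬φ, if TS_p has no reachable state ⟨s,q⟩ with q ∈ F lying on a cycle, then Trace(TS) ∩ Words(¬φ) = ∅, i.e., TS ⊨ φ. In abstract graph-theoretic form: in a finite directed graph, there exists an infinite path visiting a set F of vertices infinitely often starting from an initial set if and only if there exists a vertex v ∈ F that is reachable from the initial set and lies on a directed cycle. -/

import Mathlib

private lemma chain_of_rtg {V : Type*} {E : V → V → Prop} {a b : V}
    (h : Relation.ReflTransGen E a b) :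
    ∃ (m : ℕ) (f : ℕ → V), f 0 = a ∧ f m = b ∧ ∀ k < m, E (f k) (f (k + 1)) := by
  induction h with
  | refl => exact ⟨0, fun _ => a, rfl, rfl, by omega⟩
  | @tail b c hab e ih =>
    obtain ⟨m, f, h0, hm, hstep⟩ := ih
    refine ⟨m + 1, fun k => if k ≤ m then f k else c, by simp [h0], by simp, ?_⟩
    intro k hk
    rcases lt_or_eq_of_le (Nat.lt_succ_iff.mp hk) with hk' | hk'
    · simp only [if_pos (Nat.le_of_lt hk'), if_pos (Nat.succ_le_of_lt hk')]
      exact hstep k hk'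
    · subst hk'
      simp [hm, e]

private lemma chain_of_tg {V : Type*} {E : V → V → Prop} {a b : V}
    (h : Relation.TransGen E a b) :
    ∃ (m : ℕ) (f : ℕ → V), 0 < m ∧ f 0 = a ∧ f m = b ∧ ∀ k < m, E (f k) (f (k + 1)) := by
  obtain ⟨c, hac, hcb⟩ := Relation.TransGen.head'_iff.mp h
  obtain ⟨m, f, h0, hm, hstep⟩ := chain_of_rtg hcb
  refine ⟨m + 1, fun k => if k = 0 then a else f (k - 1), Nat.succ_pos m, by simp, by simp [hm], ?_⟩
  intro k hk
  rcases Nat.eq_zero_or_pos k with hk0 | hk0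
  · subst hk0; simpa [h0] using hac
  · have h1 : k ≠ 0 := Nat.pos_iff_ne_zero.mp hk0
    have h2 : k + 1 ≠ 0 := by omega
    simp only [if_neg h1, if_neg h2]
    have : k + 1 - 1 = (k - 1) + 1 := by omega
    rw [this]
    exact hstep (k - 1) (by omega)

private lemma rtg_of_path {V : Type*} {E : V → V → Prop} {π : ℕ → V}
    (hstep : ∀ n, E (π n) (π (n + 1))) (n : ℕ) :
    Relation.ReflTransGen E (π 0) (π n) := by
  induction n with
  | zero => exact Relation.ReflTransGen.refl
  | succ n ih => exact ih.tail (hstep n)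

private lemma tg_of_path {V : Type*} {E : V → V → Prop} {π : ℕ → V}
    (hstep : ∀ n, E (π n) (π (n + 1))) {n m : ℕ} (h : n < m) :
    Relation.TransGen E (π n) (π m) := by
  induction m, h using Nat.le_induction with
  | base => exact Relation.TransGen.single (hstep n)
  | succ m hm ih => exact ih.tail (hstep m)

theorem stmt_14 {V : Type*} [Fintype V] (E : V → V → Prop) (I F : Set V) :
    (∃ π : ℕ → V, π 0 ∈ I ∧ (∀ n, E (π n) (π (n + 1))) ∧
        {n : ℕ | π n ∈ F}.Infinite) ↔
      (∃ v ∈ F, (∃ i ∈ I, Relation.ReflTransGen E i v) ∧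
        Relation.TransGen E v v) := by
  constructor
  · rintro ⟨π, h0, hstep, hinf⟩
    have key : ∃ v : V, {n : ℕ | π n ∈ F ∧ π n = v}.Infinite := by
      by_contra h
      push_neg at h
      have hsub : {n : ℕ | π n ∈ F} ⊆ ⋃ v : V, {n : ℕ | π n ∈ F ∧ π n = v} :=
        fun n hn => Set.mem_iUnion.2 ⟨π n, hn, rfl⟩
      have hfin : (⋃ v : V, {n : ℕ | π n ∈ F ∧ π n = v}).Finite :=
        Set.finite_iUnion (fun v => h v)
      exact hinf (hfin.subset hsub)
    obtain ⟨v, hv⟩ := key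
    obtain ⟨n₁, hn₁F, hn₁⟩ := hv.nonempty
    obtain ⟨n₂, ⟨hn₂F, hn₂⟩, hlt⟩ := hv.exists_gt n₁
    refine ⟨v, hn₁ ▸ hn₁F, ⟨π 0, h0, hn₁ ▸ rtg_of_path hstep n₁⟩, ?_⟩
    have := tg_of_path hstep hlt
    rwa [hn₁, hn₂] at this
  · rintro ⟨v, hvF, ⟨i, hiI, hrtg⟩, htg⟩
    obtain ⟨p, f, hf0, hfp, hfstep⟩ := chain_of_rtg hrtg
    obtain ⟨L, g, hL, hg0, hgL, hgstep⟩ := chain_of_tg htg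
    set π : ℕ → V := fun n => if n < p then f n else g ((n - p) % L) with hπ
    refine ⟨π, ?_, ?_, ?_⟩
    · rcases Nat.eq_zero_or_pos p with hp | hp
      · subst hp
        have hpi : π 0 = v := by simp [hπ, hg0]
        have hvi : i = v := by rw [← hf0, hfp]
        rw [hpi, ← hvi]; exact hiI
      · simpa [hπ, hp, hf0] using hiI
    · intro n
      by_cases h1 : n + 1 < p
      · have h2 : n < p := by omega
        simp only [hπ, if_pos h1, if_pos h2]
        exact hfstep n (by omega)
      · by_cases h2 : n < p
        · have h3 : n + 1 = p := by omega
          simp only [hπ, if_pos h2, if_neg h1]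
          rw [h3]
          simp only [Nat.sub_self, Nat.zero_mod, hg0, ← hfp]
          have := hfstep n (by omega)
          rwa [h3] at this
        · simp only [hπ, if_neg h1, if_neg h2]
          have hr : (n - p) % L < L := Nat.mod_lt _ hL
          set r := (n - p) % L with hrdef
          have hq : n - p = r + L * ((n - p) / L) := (Nat.mod_add_div (n - p) L).symm
          have hnp1 : n + 1 - p = (r + 1) + L * ((n - p) / L) := by omega
          rw [hnp1, Nat.add_mul_mod_self_left]
          rcases lt_or_eq_of_le (Nat.succ_le_of_lt hr) with hr1 | hr1
          · rw [Nat.mod_eq_of_lt hr1]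
            exact hgstep r hr
          · have hr1' : r + 1 = L := hr1
            have h := hgstep r hr
            rw [hr1'] at h
            rw [hr1', Nat.mod_self, hg0, ← hgL]
            exact h
    · apply Set.infinite_of_injective_forall_mem
        (f := fun k : ℕ => p + k * L)
      · intro a b hab
        simp only at hab
        exact Nat.eq_of_mul_eq_mul_right hL (Nat.add_left_cancel hab)
      · intro k
        simp only [Set.mem_setOf_eq, hπ]
        rw [if_neg (by omega)]
        rw [show p + k * L - p = k * L by omega, Nat.mul_mod_left, hg0]
        exact hvF
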